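/- Let 𝓗 be a complex Hilbert space, let H₀ and V be bounded self-adjoint operators on 𝓗, and let A and B be bounded operators on 𝓗. Then for every t ≥ 0: ‖[τ_t^{H₀+V}(A), B]‖ ≤ ‖[τ_t^{H₀}(A), B]‖ + 2‖B‖ ∫_0^t ‖[τ_s^{H₀}(A), V]‖ ds. -/

import Mathlib

open MeasureTheory intervalIntegral

variable {𝓗 : Type*} [NormedAddCommGroup 𝓗] [InnerProductSpace ℂ 𝓗] [CompleteSpace 𝓗]

/-- Heisenberg evolution `τ_t^H(A) = e^{itH} A e^{−itH}` of a bounded operator `A`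
under a bounded Hamiltonian `H`. -/
noncomputable def heisenberg (H : 𝓗 →L[ℂ] 𝓗) (t : ℝ) (A : 𝓗 →L[ℂ] 𝓗) : 𝓗 →L[ℂ] 𝓗 :=
  NormedSpace.exp ((Complex.I * (t : ℂ)) • H) * A *
    NormedSpace.exp (-((Complex.I * (t : ℂ)) • H))

/-- The commutator `[A, B] = AB − BA` of two bounded operators. -/
def commutatorCLM (A B : 𝓗 →L[ℂ] 𝓗) : 𝓗 →L[ℂ] 𝓗 := A * B - B * A

open NormedSpace Complex

private lemma duhamel_aux_identity {R : Type*} [Ring R] (u e a e' w X X₀ Xv : R)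
    (hX : X = X₀ + Xv) (he : e * X₀ = X₀ * e) (hw : w * X = X * w) :
    ((u * X * e + u * -(e * X₀)) * a * e' + u * e * a * (e' * X₀)) * w
      + u * e * a * e' * -(w * X)
    = u * (Xv * (e * a * e') - (e * a * e') * Xv) * w := by
  subst hX
  rw [he, hw]
  noncomm_ring

private lemma smul_eq_smul (u : ℝ) (K : 𝓗 →L[ℂ] 𝓗) :
    (Complex.I * (u : ℂ)) • K = u • (I • K) := by
  rw [← algebraMap_smul ℂ u (I • K), smul_smul, Complex.coe_algebraMap, mul_comm]

private lemma heisenberg_eq (K A : 𝓗 →L[ℂ] 𝓗) (u : ℝ) :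
    heisenberg K u A = NormedSpace.exp (u • (I • K)) * A * NormedSpace.exp ((-u) • (I • K)) := by
  rw [heisenberg, smul_eq_smul, ← neg_smul]

private lemma expE_hasDerivAt (K : 𝓗 →L[ℂ] 𝓗) (s : ℝ) :
    HasDerivAt (fun r : ℝ => NormedSpace.exp (r • (I • K))) (NormedSpace.exp (s • (I • K)) * (I • K)) s := by
  exact hasDerivAt_exp_smul_const (I • K) s

private lemma expE_continuous (K : 𝓗 →L[ℂ] 𝓗) :
    Continuous (fun r : ℝ => NormedSpace.exp (r • (I • K))) := by
  letI : NormedAlgebra ℚ (𝓗 →L[ℂ] 𝓗) := NormedAlgebra.restrictScalars ℚ ℂ _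
  exact exp_continuous.comp (continuous_id.smul continuous_const)

private lemma expE_mem_unitary {K : 𝓗 →L[ℂ] 𝓗} (hK : IsSelfAdjoint K) (s : ℝ) :
    NormedSpace.exp (s • (I • K)) ∈ unitary (𝓗 →L[ℂ] 𝓗) := by
  rw [smul_comm]
  letI : NormedAlgebra ℚ (𝓗 →L[ℂ] 𝓗) := NormedAlgebra.restrictScalars ℚ ℂ _
  exact exp_mem_unitary_of_mem_skewAdjoint
    ((IsSelfAdjoint.smul (by rfl) hK).smul_mem_skewAdjoint conj_I)

private lemma commute_exp (K : 𝓗 →L[ℂ] 𝓗) (u : ℝ) :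
    NormedSpace.exp (u • (I • K)) * (I • K) = (I • K) * NormedSpace.exp (u • (I • K)) :=
  (((Commute.refl (I • K)).smul_right u).exp_right).eq.symm

/-- The interaction-picture (Duhamel) inequality, Eq. (10) of the paper:
`‖[τ_t^{H₀+V}(A), B]‖ ≤ ‖[τ_t^{H₀}(A), B]‖ + 2‖B‖ ∫_0^t ‖[τ_s^{H₀}(A), V]‖ ds`
for bounded self-adjoint `H₀, V`, bounded `A, B` and `t ≥ 0`. -/
theorem duhamel_commutator_bound (H₀ V A B : 𝓗 →L[ℂ] 𝓗)
    (hH₀ : IsSelfAdjoint H₀) (hV : IsSelfAdjoint V) (t : ℝ) (ht : 0 ≤ t) :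
    ‖commutatorCLM (heisenberg (H₀ + V) t A) B‖ ≤
      ‖commutatorCLM (heisenberg H₀ t A) B‖ +
        2 * ‖B‖ * ∫ s in (0 : ℝ)..t, ‖commutatorCLM (heisenberg H₀ s A) V‖ := by
  rcases subsingleton_or_nontrivial 𝓗 with hsub | hnt
  · have hz : ∀ X : 𝓗 →L[ℂ] 𝓗, X = 0 := fun X => Subsingleton.elim _ _
    simp [hz (commutatorCLM (heisenberg (H₀ + V) t A) B),
      hz (commutatorCLM (heisenberg H₀ t A) B),
      fun s => hz (commutatorCLM (heisenberg H₀ s A) V)]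
  set H : 𝓗 →L[ℂ] 𝓗 := H₀ + V with hHdef
  have hH : IsSelfAdjoint H := hH₀.add hV
  set E : (𝓗 →L[ℂ] 𝓗) → ℝ → (𝓗 →L[ℂ] 𝓗) := fun K r => NormedSpace.exp (r • (I • K)) with hE
  set M : ℝ → (𝓗 →L[ℂ] 𝓗) := fun s => E H₀ (t - s) * A * E H₀ (s - t) with hM
  set g : ℝ → (𝓗 →L[ℂ] 𝓗) := fun s => E H s * E H₀ (t - s) * A * E H₀ (s - t) * E H (-s)
    with hg
  set D : ℝ → (𝓗 →L[ℂ] 𝓗) :=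
    fun s => E H s * (I • (V * M s) - I • (M s * V)) * E H (-s) with hD
  -- derivative of g
  have key : ∀ s : ℝ, HasDerivAt g (D s) s := by
    intro s
    have h1 : HasDerivAt (fun r : ℝ => E H r) (E H s * (I • H)) s := expE_hasDerivAt H s
    have h2 : HasDerivAt (fun r : ℝ => E H₀ (t - r)) (-(E H₀ (t - s) * (I • H₀))) s := by
      have := (expE_hasDerivAt H₀ (t - s)).scomp s ((hasDerivAt_id s).const_sub t)
      rw [neg_one_smul] at this
      exact this
    have h3 : HasDerivAt (fun r : ℝ => E H₀ (r - t)) (E H₀ (s - t) * (I • H₀)) s := by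
      have := (expE_hasDerivAt H₀ (s - t)).scomp s ((hasDerivAt_id s).sub_const t)
      rw [one_smul] at this
      exact this
    have h4 : HasDerivAt (fun r : ℝ => E H (-r)) (-(E H (-s) * (I • H))) s := by
      have := (expE_hasDerivAt H (-s)).scomp s (hasDerivAt_neg s)
      rw [neg_one_smul] at this
      exact this
    have hraw := (((h1.mul h2).mul_const A).mul h3).mul h4
    have hid := duhamel_aux_identity (E H s) (E H₀ (t - s)) A (E H₀ (s - t)) (E H (-s))
      (I • H) (I • H₀) (I • V) (by rw [hHdef, smul_add]) (commute_exp H₀ (t - s))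
      (commute_exp H (-s))
    simp only [Pi.mul_apply] at hraw
    rw [hid] at hraw
    have hfinal : E H s * (I • (V * M s) - I • (M s * V)) * E H (-s)
        = E H s * (I • V * (E H₀ (t - s) * A * E H₀ (s - t))
            - E H₀ (t - s) * A * E H₀ (s - t) * (I • V)) * E H (-s) := by
      rw [hM]
      simp only [smul_mul_assoc, mul_smul_comm]
    rw [hD]
    simp only []
    rw [hfinal]
    exact hraw
  -- continuity and integrability of D
  have hMc : Continuous M := by
    exact (((expE_continuous H₀).comp (continuous_const.sub continuous_id)).mul
      continuous_const).mul ((expE_continuous H₀).comp (continuous_id.sub continuous_const))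
  have hDc : Continuous D := by
    refine ((expE_continuous H).mul ?_).mul ((expE_continuous H).comp continuous_neg)
    exact ((continuous_const.mul hMc).const_smul I).sub ((hMc.mul continuous_const).const_smul I)
  have hint : IntervalIntegrable D volume 0 t := hDc.intervalIntegrable 0 t
  have hFTC : (∫ s in (0:ℝ)..t, D s) = g t - g 0 :=
    integral_eq_sub_of_hasDerivAt (fun s _ => key s) hint
  have hE0 : ∀ K : 𝓗 →L[ℂ] 𝓗, E K 0 = 1 := by
    intro K
    rw [hE]
    simp only [zero_smul]
    exact exp_zero
  have hgt : g t = heisenberg H t A := by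
    rw [hg]
    simp only [sub_self, hE0, mul_one, one_mul]
    rw [heisenberg_eq]
  have hg0 : g 0 = heisenberg H₀ t A := by
    rw [hg]
    simp only [neg_zero, sub_zero, zero_sub, hE0, mul_one, one_mul]
    rw [heisenberg_eq]
  have hsplit : commutatorCLM (heisenberg H t A) B
      = commutatorCLM (heisenberg H₀ t A) B + commutatorCLM (∫ s in (0:ℝ)..t, D s) B := by
    rw [hFTC, hgt, hg0]
    simp only [commutatorCLM]
    noncomm_ring
  have hnormcomm : ∀ Z : 𝓗 →L[ℂ] 𝓗, ‖commutatorCLM Z B‖ ≤ 2 * ‖B‖ * ‖Z‖ := by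
    intro Z
    calc ‖Z * B - B * Z‖ ≤ ‖Z * B‖ + ‖B * Z‖ := norm_sub_le _ _
      _ ≤ ‖Z‖ * ‖B‖ + ‖B‖ * ‖Z‖ := add_le_add (norm_mul_le _ _) (norm_mul_le _ _)
      _ = 2 * ‖B‖ * ‖Z‖ := by ring
  have hDnorm : ∀ s : ℝ, ‖D s‖ = ‖commutatorCLM (heisenberg H₀ (t - s) A) V‖ := by
    intro s
    have hMh : M s = heisenberg H₀ (t - s) A := by
      rw [heisenberg_eq, hM, neg_sub]
    have hC : I • (V * M s) - I • (M s * V) = -(I • commutatorCLM (M s) V) := by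
      simp only [commutatorCLM, smul_sub, neg_sub]
    rw [hD]
    simp only []
    rw [hC, mul_assoc]
    rw [CStarRing.norm_mem_unitary_mul _ (expE_mem_unitary hH s),
      CStarRing.norm_mul_mem_unitary _ (expE_mem_unitary hH (-s)),
      norm_neg, norm_smul, Complex.norm_I, one_mul, hMh]
  have hIeq : (∫ s in (0:ℝ)..t, ‖D s‖)
      = ∫ s in (0:ℝ)..t, ‖commutatorCLM (heisenberg H₀ s A) V‖ := by
    rw [intervalIntegral.integral_congr
      (g := fun s => ‖commutatorCLM (heisenberg H₀ (t - s) A) V‖) (fun s _ => hDnorm s)]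
    simpa using intervalIntegral.integral_comp_sub_left (a := (0:ℝ)) (b := t)
      (fun s => ‖commutatorCLM (heisenberg H₀ s A) V‖) t
  calc ‖commutatorCLM (heisenberg H t A) B‖
      = ‖commutatorCLM (heisenberg H₀ t A) B + commutatorCLM (∫ s in (0:ℝ)..t, D s) B‖ := by
        rw [hsplit]
    _ ≤ ‖commutatorCLM (heisenberg H₀ t A) B‖ + ‖commutatorCLM (∫ s in (0:ℝ)..t, D s) B‖ :=
        norm_add_le _ _
    _ ≤ ‖commutatorCLM (heisenberg H₀ t A) B‖ + 2 * ‖B‖ * ‖∫ s in (0:ℝ)..t, D s‖ :=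
        add_le_add_right (hnormcomm _) _
    _ ≤ ‖commutatorCLM (heisenberg H₀ t A) B‖ + 2 * ‖B‖ * ∫ s in (0:ℝ)..t, ‖D s‖ := by
        gcongr
        exact intervalIntegral.norm_integral_le_integral_norm ht
    _ = _ := by rw [hIeq]
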